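/- Let u ∈ W be an involution (u² = 1). Then the centralizer of u in W equals the normalizer in W of the parabolic subgroup P = Z_W(Fix_V(u)): C_W(u) = N_W(Z_W(Fix_V(u))). -/

import Mathlib

open scoped RealInnerProductSpace

variable {V : Type*} [NormedAddCommGroup V] [InnerProductSpace ℝ V] [FiniteDimensional ℝ V]

/-- `r` is a reflection: there is a nonzero root `α` with `r α = -α` and `r` fixes
every vector orthogonal to `α`. -/
def IsReflection (r : V ≃ₗᵢ[ℝ] V) : Prop :=
  ∃ α : V, α ≠ 0 ∧ r α = -α ∧ ∀ v : V, ⟪α, v⟫ = 0 → r v = v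

/-- The pointwise stabilizer in `W` of a set `s ⊆ V`. -/
def pointwiseStabilizer (W : Subgroup (V ≃ₗᵢ[ℝ] V)) (s : Set V) : Subgroup (V ≃ₗᵢ[ℝ] V) where
  carrier := {w | w ∈ W ∧ ∀ v ∈ s, w v = v}
  one_mem' := ⟨W.one_mem, fun v _ => rfl⟩
  mul_mem' := fun {a b} ha hb => ⟨W.mul_mem ha.1 hb.1, fun v hv => by
    have h : (a * b) v = a (b v) := rfl
    rw [h, hb.2 v hv, ha.2 v hv]⟩
  inv_mem' := fun {a} ha => ⟨W.inv_mem ha.1, fun v hv => by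
    show a.symm v = v
    conv_lhs => rw [← ha.2 v hv]
    exact a.symm_apply_apply v⟩

lemma mem_pointwiseStabilizer {W : Subgroup (V ≃ₗᵢ[ℝ] V)} {s : Set V} {g : V ≃ₗᵢ[ℝ] V} :
    g ∈ pointwiseStabilizer W s ↔ g ∈ W ∧ ∀ v ∈ s, g v = v := Iff.rfl

/-- If `f` is fixed by an isometric involution `u`, then `f ⊥ (x - u x)`. -/
lemma fix_orth (u : V ≃ₗᵢ[ℝ] V) (huu : ∀ x, u (u x) = x)
    (f x : V) (hf : u f = f) : ⟪f, x - u x⟫ = 0 := by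
  have h1 : ⟪u f, u (u x)⟫ = ⟪f, u x⟫ := u.inner_map_map f (u x)
  rw [hf, huu] at h1
  rw [inner_sub_right, ← h1, sub_self]

/-- An isometric involution is determined by its fixed subspace. -/
lemma eq_of_fix_eq (u v : V ≃ₗᵢ[ℝ] V) (huu : ∀ x, u (u x) = x) (hvv : ∀ x, v (v x) = x)
    (h : ∀ x, u x = x ↔ v x = x) : v = u := by
  ext x
  set a := (2:ℝ)⁻¹ • (x + u x) with ha
  set b := (2:ℝ)⁻¹ • (x - u x) with hb
  have hua : u a = a := by rw [ha, map_smul, map_add, huu, add_comm]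
  have hub : u b = -b := by
    rw [hb, map_smul, map_sub, huu, ← smul_neg, neg_sub]
  have hva : v a = a := (h a).mp hua
  set c := (2:ℝ)⁻¹ • (b + v b) with hc
  have hvc : v c = c := by rw [hc, map_smul, map_add, hvv, add_comm]
  have huc : u c = c := (h c).mpr hvc
  have hcb : ⟪c, b⟫ = 0 := by
    have h0 := fix_orth u huu c b huc
    rw [hub, sub_neg_eq_add] at h0
    have h2 : ⟪c, b + b⟫ = (2:ℝ) * ⟪c, b⟫ := by rw [inner_add_right]; ring
    rw [h2] at h0
    linarith
  have hcvb : ⟪c, v b⟫ = 0 := by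
    calc ⟪c, v b⟫ = ⟪v c, v b⟫ := by rw [hvc]
    _ = ⟪c, b⟫ := v.inner_map_map c b
    _ = 0 := hcb
  have hcc : ⟪c, c⟫ = 0 := by
    rw [hc, inner_smul_right, inner_add_right, hcb, hcvb]; ring
  have hc0 : c = 0 := inner_self_eq_zero.mp hcc
  have hvb : v b = -b := by
    have h2 : b + v b = (2:ℝ) • c := by rw [hc, smul_smul]; norm_num
    rw [hc0, smul_zero] at h2
    exact eq_neg_of_add_eq_zero_right h2
  have hx : a + b = x := by
    rw [ha, hb, ← smul_add]
    have h3 : x + u x + (x - u x) = (2:ℝ) • x := by module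
    rw [h3, smul_smul]; norm_num
  have hux : a - b = u x := by
    rw [ha, hb, ← smul_sub]
    have h3 : x + u x - (x - u x) = (2:ℝ) • u x := by module
    rw [h3, smul_smul]; norm_num
  calc v x = v (a + b) := by rw [hx]
  _ = v a + v b := map_add _ _ _
  _ = a - b := by rw [hva, hvb, ← sub_eq_add_neg]
  _ = u x := hux

lemma mul_apply' (a b : V ≃ₗᵢ[ℝ] V) (x : V) : (a * b) x = a (b x) := rfl

lemma inv_apply' (a : V ≃ₗᵢ[ℝ] V) (x : V) : a⁻¹ x = a.symm x := rfl

/-- The centralizer of an involution `u ∈ W` is the normalizer in `W` of the parabolic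
subgroup `Z_W(Fix_V(u))`. -/
theorem centralizer_involution_eq_normalizer_parabolic
    (W : Subgroup (V ≃ₗᵢ[ℝ] V))
    (hWfin : (W : Set (V ≃ₗᵢ[ℝ] V)).Finite)
    (hWgen : W = Subgroup.closure {r : V ≃ₗᵢ[ℝ] V | r ∈ W ∧ IsReflection r})
    (u : V ≃ₗᵢ[ℝ] V) (hu : u ∈ W) (hu2 : u ^ 2 = 1) :
    W ⊓ Subgroup.centralizer {u}
      = W ⊓ Subgroup.normalizer (pointwiseStabilizer W {v : V | u v = v} : Set (V ≃ₗᵢ[ℝ] V)) := by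
  have huu : ∀ x, u (u x) = x := by
    intro x
    have h : (u ^ 2) x = (1 : V ≃ₗᵢ[ℝ] V) x := by rw [hu2]
    rw [pow_two, mul_apply'] at h
    simpa using h
  set P := pointwiseStabilizer W {v : V | u v = v} with hP
  have huP : u ∈ P := ⟨hu, fun v hv => hv⟩
  ext w
  simp only [Subgroup.mem_inf]
  constructor
  · rintro ⟨hwW, hwC⟩
    refine ⟨hwW, ?_⟩
    have hcomm : u * w = w * u := Subgroup.mem_centralizer_iff.mp hwC u rfl
    have hcomm' : ∀ x, u (w x) = w (u x) := by
      intro x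
      have := congrArg (fun e : V ≃ₗᵢ[ℝ] V => e x) hcomm
      simpa [mul_apply'] using this
    have hcomm'' : ∀ x, u (w.symm x) = w.symm (u x) := by
      intro x
      have h1 := hcomm' (w.symm x)
      rw [w.apply_symm_apply] at h1
      calc u (w.symm x) = w.symm (w (u (w.symm x))) := (w.symm_apply_apply _).symm
      _ = w.symm (u x) := by rw [← h1]
    rw [Subgroup.mem_normalizer_iff]
    intro h
    constructor
    · rintro ⟨hhW, hhfix⟩
      refine ⟨W.mul_mem (W.mul_mem hwW hhW) (W.inv_mem hwW), ?_⟩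
      intro v hv
      have hsymm : u (w.symm v) = w.symm v := by rw [hcomm'' v, hv]
      have h1 : (w * h * w⁻¹) v = w (h (w.symm v)) := rfl
      rw [h1, hhfix (w.symm v) hsymm, w.apply_symm_apply]
    · rintro ⟨hhW', hhfix'⟩
      have hhW : h ∈ W := by
        have heq : h = w⁻¹ * (w * h * w⁻¹) * w := by group
        rw [heq]
        exact W.mul_mem (W.mul_mem (W.inv_mem hwW) hhW') hwW
      refine ⟨hhW, ?_⟩
      intro v hv
      have hwv : u (w v) = w v := by rw [hcomm' v, hv]
      have h1 := hhfix' (w v) hwv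
      have h2 : (w * h * w⁻¹) (w v) = w (h v) := by
        rw [mul_apply', mul_apply', inv_apply', w.symm_apply_apply]
      rw [h2] at h1
      exact w.injective h1
  · rintro ⟨hwW, hwN⟩
    refine ⟨hwW, ?_⟩
    have hv1 : w * u * w⁻¹ ∈ P := (Subgroup.mem_normalizer_iff.mp hwN u).mp huP
    have hwN' : w⁻¹ ∈ Subgroup.normalizer (P : Set (V ≃ₗᵢ[ℝ] V)) := (Subgroup.normalizer (P : Set (V ≃ₗᵢ[ℝ] V))).inv_mem hwN
    have hv2 : w⁻¹ * u * w ∈ P := by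
      have := (Subgroup.mem_normalizer_iff.mp hwN' u).mp huP
      simpa using this
    set q := w * u * w⁻¹ with hq
    have hqq : ∀ x, q (q x) = x := by
      intro x
      simp only [hq, mul_apply', inv_apply']
      rw [w.symm_apply_apply, huu, w.apply_symm_apply]
    have hfix : ∀ x, u x = x ↔ q x = x := by
      intro x
      constructor
      · exact fun hx => hv1.2 x hx
      · intro hx
        have h1 : u (w.symm x) = w.symm x := by
          have h2 : w (u (w.symm x)) = x := hx
          calc u (w.symm x) = w.symm (w (u (w.symm x))) := (w.symm_apply_apply _).symm
          _ = w.symm x := by rw [h2]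
        have h3 := hv2.2 (w.symm x) h1
        have h4 : w.symm (u (w (w.symm x))) = w.symm x := h3
        rw [w.apply_symm_apply] at h4
        exact w.symm.injective h4
    have hque : q = u := eq_of_fix_eq u q huu hqq hfix
    rw [Subgroup.mem_centralizer_iff]
    rintro g rfl
    have : w * g * w⁻¹ = g := hque
    calc g * w = (w * g * w⁻¹) * w := by rw [this]
    _ = w * g := by group
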